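/- For z ∈ 2^ω and f ∈ ω^ω with f(n) ≥ 1 for all n, let F(n) = Σ_{k≤n} f(k), and define B(z,f) = {t ∈ 2^ω : for all but finitely many n, there exists j ∈ [F(n), F(n+1)) with t(j) ≠ z(j)}. Then the family {B(z,f) : z ∈ 2^ω, f ∈ ω^ω} is a basis for the meager ideal on 2^ω: each B(z,f) is meager, and every meager set is contained in some B(z,f). -/

import Mathlib

open PiNat Set

/-- `F f n = Σ_{k ≤ n} f k`. -/
def Ftil (f : ℕ → ℕ) (n : ℕ) : ℕ := ∑ k ∈ Finset.range (n + 1), f k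

/-- The basic meager set `B(z, f)`. -/
def Bset (z : ℕ → Bool) (f : ℕ → ℕ) : Set (ℕ → Bool) :=
  {t | ∀ᶠ n in Filter.atTop, ∃ j, Ftil f n ≤ j ∧ j < Ftil f (n + 1) ∧ t j ≠ z j}

lemma cyl_nwd_extend {D : Set (ℕ → Bool)} (hD : IsClosed D) (hnwd : interior D = ∅)
    (s : ℕ → Bool) (m : ℕ) :
    ∃ (s' : ℕ → Bool) (m' : ℕ), m ≤ m' ∧ (∀ i < m, s' i = s i) ∧
      Disjoint (cylinder s' m') D := by
  have hne : ¬ cylinder s m ⊆ D := by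
    intro h
    have : cylinder s m ⊆ interior D :=
      interior_maximal h (isOpen_cylinder (fun _ => Bool) s m)
    rw [hnwd] at this
    exact this (self_mem_cylinder s m)
  obtain ⟨t, htc, htD⟩ : ∃ t, t ∈ cylinder s m ∧ t ∉ D := by
    by_contra h
    push_neg at h
    exact hne fun t ht => h t ht
  obtain ⟨v, ⟨x, n, rfl⟩, htv, hvD⟩ :=
    (isTopologicalBasis_cylinders (fun _ : ℕ => Bool)).exists_subset_of_mem_open
      (by simpa using htD : t ∈ Dᶜ) hD.isOpen_compl
  refine ⟨t, max m n, le_max_left _ _, fun i hi => htc i hi, ?_⟩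
  rw [Set.disjoint_left]
  intro u hu huD
  have : u ∈ cylinder x n := by
    intro i hi
    rw [hu i (lt_of_lt_of_le hi (le_max_right m n))]
    exact htv i hi
  exact hvD this huD

lemma block_extend {D : Set (ℕ → Bool)} (hD : IsClosed D) (hnwd : interior D = ∅) (p : ℕ) :
    ∃ (w : ℕ → Bool) (q : ℕ), p < q ∧
      ∀ t : ℕ → Bool, (∀ j, p ≤ j → j < q → t j = w j) → t ∉ D := by
  have key : ∀ S : Finset (Fin p → Bool), ∃ (w : ℕ → Bool) (q : ℕ), p ≤ q ∧
      ∀ v ∈ S, ∀ t : ℕ → Bool, (∀ i : Fin p, t i = v i) →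
        (∀ j, p ≤ j → j < q → t j = w j) → t ∉ D := by
    intro S
    induction S using Finset.induction with
    | empty => exact ⟨fun _ => false, p, le_refl p, fun v hv => absurd hv (by simp)⟩
    | @insert v S hvS ih =>
      obtain ⟨w, q, hpq, hw⟩ := ih
      set s : ℕ → Bool := fun j => if h : j < p then v ⟨j, h⟩ else w j with hs
      obtain ⟨s', q', hqq', hagree, hdisj⟩ := cyl_nwd_extend hD hnwd s q
      refine ⟨s', q', hpq.trans hqq', ?_⟩
      intro v' hv' t htv htw
      rcases Finset.mem_insert.mp hv' with rfl | hv'S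
      · have : t ∈ cylinder s' q' := by
          intro i hi
          by_cases hip : i < p
          · rw [show t i = v' ⟨i, hip⟩ from htv ⟨i, hip⟩]
            rw [hagree i (lt_of_lt_of_le hip hpq), hs]
            simp [hip]
          · exact (htw i (not_lt.mp hip) hi).trans rfl
        exact fun hD' => Set.disjoint_left.mp hdisj this hD'
      · refine hw v' hv'S t htv ?_
        intro j hpj hjq
        rw [htw j hpj (lt_of_lt_of_le hjq hqq'), hagree j hjq, hs]
        simp [not_lt.mpr hpj]
  obtain ⟨w, q, hpq, hw⟩ := key Finset.univ
  refine ⟨w, q + 1, lt_of_le_of_lt hpq (Nat.lt_succ_self q), ?_⟩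
  intro t ht
  exact hw (fun i => t i) (Finset.mem_univ _) t (fun i => rfl)
    (fun j h1 h2 => ht j h1 (h2.trans (Nat.lt_succ_self q)))

lemma Ftil_ge (f : ℕ → ℕ) (hf : ∀ n, 1 ≤ f n) (n : ℕ) : n + 1 ≤ Ftil f n := by
  calc n + 1 = ∑ k ∈ Finset.range (n+1), 1 := by simp
  _ ≤ Ftil f n := Finset.sum_le_sum fun k _ => hf k

lemma nwd_isMeagre {s : Set (ℕ → Bool)} (hc : IsClosed s) (hi : interior s = ∅) :
    IsMeagre s := by
  rw [isMeagre_iff_countable_union_isNowhereDense]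
  exact ⟨{s}, by simpa [hc.isNowhereDense_iff], countable_singleton s, by simp⟩

lemma Bset_meagre (z : ℕ → Bool) (f : ℕ → ℕ) (hf : ∀ n, 1 ≤ f n) :
    IsMeagre (Bset z f) := by
  have hBeq : Bset z f = ⋃ N, {t : ℕ → Bool |
      ∀ n, N ≤ n → ∃ j, Ftil f n ≤ j ∧ j < Ftil f (n + 1) ∧ t j ≠ z j} := by
    ext t
    simp [Bset, Filter.eventually_atTop, Set.mem_iUnion]
  rw [hBeq]
  apply isMeagre_iUnion
  intro N
  set C : Set (ℕ → Bool) :=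
    {t | ∀ n, N ≤ n → ∃ j, Ftil f n ≤ j ∧ j < Ftil f (n + 1) ∧ t j ≠ z j} with hC
  have hclosed : IsClosed C := by
    have : C = ⋂ n, ⋂ (_ : N ≤ n),
        ⋃ j ∈ Finset.Ico (Ftil f n) (Ftil f (n+1)), {t : ℕ → Bool | t j ≠ z j} := by
      ext t
      simp only [hC, Set.mem_setOf_eq, Set.mem_iInter, Set.mem_iUnion, Finset.mem_Ico]
      constructor
      · intro h n hn
        obtain ⟨j, h1, h2, h3⟩ := h n hn
        exact ⟨j, ⟨h1, h2⟩, h3⟩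
      · intro h n hn
        obtain ⟨j, ⟨h1, h2⟩, h3⟩ := h n hn
        exact ⟨j, h1, h2, h3⟩
    rw [this]
    refine isClosed_iInter fun n => isClosed_iInter fun _ => ?_
    apply Set.Finite.isClosed_biUnion (Finset.finite_toSet _)
    intro j _
    have : {t : ℕ → Bool | t j ≠ z j} = (fun t : ℕ → Bool => t j) ⁻¹' {z j}ᶜ := rfl
    rw [this]
    exact (isClosed_discrete _).preimage (continuous_apply j)
  have hint : interior C = ∅ := by
    by_contra h
    obtain ⟨u, hu⟩ := Set.nonempty_iff_ne_empty.mpr h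
    obtain ⟨v, ⟨x, m, rfl⟩, huv, hvC⟩ :=
      (isTopologicalBasis_cylinders (fun _ : ℕ => Bool)).exists_subset_of_mem_open hu
        isOpen_interior
    set n := max N m with hn
    set t : ℕ → Bool := fun j =>
      if Ftil f n ≤ j ∧ j < Ftil f (n+1) then z j else u j with ht
    have htC : t ∈ C := by
      apply interior_subset
      apply hvC
      intro i hi
      have him : i < Ftil f n :=
        lt_of_lt_of_le hi (le_trans (le_trans (le_max_right N m) (Nat.le_succ _))
          (Ftil_ge f hf n))
      have : t i = u i := by
        rw [ht]; simp only; rw [if_neg]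
        rintro ⟨h1, _⟩; exact absurd him (not_lt.mpr h1)
      rw [this]; exact huv i hi
    obtain ⟨j, h1, h2, h3⟩ := htC n (le_max_left N m)
    apply h3
    rw [ht]; simp only; rw [if_pos ⟨h1, h2⟩]
  exact nwd_isMeagre hclosed hint

lemma nwd_union {s t : Set (ℕ → Bool)} (hs : IsClosed s) (hsi : interior s = ∅)
    (ht : IsClosed t) (hti : interior t = ∅) : interior (s ∪ t) = ∅ := by
  rw [interior_eq_empty_iff_dense_compl] at hsi hti ⊢
  rw [Set.compl_union]
  exact Dense.inter_of_isOpen_left hsi hti hs.isOpen_compl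

lemma construct (E : ℕ → Set (ℕ → Bool)) (hcl : ∀ n, IsClosed (E n))
    (hint : ∀ n, interior (E n) = ∅) :
    ∃ (z : ℕ → Bool) (f : ℕ → ℕ), (∀ n, 1 ≤ f n) ∧
      ∀ t, t ∉ Bset z f → ∀ i, ∃ n, i ≤ n ∧ t ∉ E n := by
  choose W Q hlt hP using fun n p => block_extend (hcl n) (hint n) p
  set g : ℕ → ℕ × (ℕ → Bool) := fun n => Nat.rec ((1 : ℕ), fun _ : ℕ => false)
    (fun k ih => (Q k ih.1, fun j => if j < ih.1 then ih.2 j else W k ih.1 j)) n with hg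
  have hgs : ∀ n, g (n+1) =
      (Q n (g n).1, fun j => if j < (g n).1 then (g n).2 j else W n (g n).1 j) :=
    fun n => rfl
  set q : ℕ → ℕ := fun n => (g n).1 with hq
  have hq0 : q 0 = 1 := rfl
  have hqs : ∀ n, q (n+1) = Q n (q n) := fun n => rfl
  have hqlt : ∀ n, q n < q (n+1) := fun n => by rw [hqs]; exact hlt n (q n)
  have hqmono : ∀ {m n}, m ≤ n → q m ≤ q n := by
    intro m n h
    induction n with
    | zero => have : m = 0 := Nat.le_zero.mp h; subst this; exact le_refl _
    | succ k ih =>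
      rcases Nat.lt_or_ge m (k+1) with h' | h'
      · exact le_trans (ih (Nat.lt_succ_iff.mp h')) (le_of_lt (hqlt k))
      · have : m = k + 1 := le_antisymm h h'
        subst this; exact le_refl _
  set z : ℕ → Bool := fun j => (g (j+1)).2 j with hz
  have stab : ∀ m k, m ≤ k → ∀ j, j < q m → (g k).2 j = (g m).2 j := by
    intro m k hmk
    induction k with
    | zero =>
      have : m = 0 := Nat.le_zero.mp hmk
      subst this; intro j _; rfl
    | succ k ih =>
      rcases Nat.lt_or_ge m (k+1) with h' | h'
      · intro j hj
        have hmk' : m ≤ k := Nat.lt_succ_iff.mp h'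
        have hjk : j < q k := lt_of_lt_of_le hj (hqmono hmk')
        rw [hgs k]
        simp only [if_pos (show j < (g k).1 from hjk)]
        exact ih hmk' j hj
      · have : m = k + 1 := le_antisymm hmk h'
        subst this; intro j _; rfl
  have hqgej : ∀ n, n + 1 ≤ q n := by
    intro n
    induction n with
    | zero => rw [hq0]
    | succ k ih => have := hqlt k; omega
  have hzval : ∀ m j, j < q m → z j = (g m).2 j := by
    intro m j hj
    rcases le_or_gt m (j+1) with h | h
    · show (g (j+1)).2 j = (g m).2 j
      exact stab m (j+1) h j hj
    · have hj' : j < q (j+1) := lt_of_lt_of_le (by omega) (hqgej (j+1))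
      show (g (j+1)).2 j = (g m).2 j
      exact (stab (j+1) m (le_of_lt h) j hj').symm
  set f : ℕ → ℕ := fun n => Nat.rec 1 (fun k _ => q (k+1) - q k) n with hf
  have hf0 : f 0 = 1 := rfl
  have hfs : ∀ n, f (n+1) = q (n+1) - q n := fun n => rfl
  have hf1 : ∀ n, 1 ≤ f n := by
    intro n
    cases n with
    | zero => rw [hf0]
    | succ k => rw [hfs]; have := hqlt k; omega
  have hFq : ∀ n, Ftil f n = q n := by
    intro n
    induction n with
    | zero => simp [Ftil, hf0, hq0]
    | succ k ih =>
      rw [Ftil, Finset.sum_range_succ]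
      rw [show ∑ x ∈ Finset.range (k+1), f x = Ftil f k from rfl, ih, hfs]
      have := hqlt k; omega
  refine ⟨z, f, hf1, ?_⟩
  intro t htB i
  rw [Bset, Set.mem_setOf_eq, Filter.not_eventually] at htB
  obtain ⟨n, hin, hn⟩ := (Filter.frequently_atTop.mp htB) i
  push_neg at hn
  refine ⟨n, hin, ?_⟩
  apply hP n (q n) t
  intro j h1 h2
  have h2' : j < q (n+1) := by rw [hqs]; exact h2
  have h1' : ¬ j < q n := not_lt.mpr h1
  have : t j = z j := hn j (by rw [hFq]; exact h1) (by rw [hFq]; exact h2')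
  rw [this, hzval (n+1) j h2', hgs n]
  exact if_neg (show ¬ j < (g n).1 from h1')

theorem Bset_basis_of_meager_ideal :
    (∀ (z : ℕ → Bool) (f : ℕ → ℕ), (∀ n, 1 ≤ f n) → IsMeagre (Bset z f)) ∧
    (∀ A : Set (ℕ → Bool), IsMeagre A →
      ∃ (z : ℕ → Bool) (f : ℕ → ℕ), (∀ n, 1 ≤ f n) ∧ A ⊆ Bset z f) := by
  constructor
  · exact Bset_meagre
  · intro A hA
    obtain ⟨S, hSnwd, hSc, hsub⟩ := isMeagre_iff_countable_union_isNowhereDense.mp hA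
    have hS'c : (insert (∅ : Set (ℕ → Bool)) S).Countable := hSc.insert _
    obtain ⟨e, he⟩ := hS'c.exists_eq_range (Set.insert_nonempty _ _)
    -- each e n is nowhere dense
    have henwd : ∀ n, IsNowhereDense (e n) := by
      intro n
      have : e n ∈ insert (∅ : Set (ℕ → Bool)) S := he ▸ Set.mem_range_self n
      rcases Set.mem_insert_iff.mp this with h | h
      · rw [h]; exact isNowhereDense_empty
      · exact hSnwd _ h
    set E : ℕ → Set (ℕ → Bool) :=
      fun n => ⋃ i ∈ Finset.range (n+1), closure (e i) with hE
    have hEcl : ∀ n, IsClosed (E n) := by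
      intro n
      exact Set.Finite.isClosed_biUnion (Finset.finite_toSet _)
        fun i _ => isClosed_closure
    have hEint : ∀ n, interior (E n) = ∅ := by
      intro n
      induction n with
      | zero => have h0 : interior (closure (e 0)) = ∅ := henwd 0; simpa [hE] using h0
      | succ k ih =>
        have : E (k+1) = E k ∪ closure (e (k+1)) := by
          simp only [hE]
          rw [Finset.range_add_one, Finset.set_biUnion_insert, Set.union_comm]
        rw [this]
        exact nwd_union (hEcl k) ih isClosed_closure (henwd (k+1))
    obtain ⟨z, f, hf1, hzf⟩ := construct E hEcl hEint
    refine ⟨z, f, hf1, ?_⟩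
    intro t htA
    by_contra htB
    obtain ⟨s, hsS, hts⟩ := hsub htA
    obtain ⟨i, hei⟩ : ∃ i, e i = s := by
      have : s ∈ insert (∅ : Set (ℕ → Bool)) S := Set.mem_insert_of_mem _ hsS
      rw [he] at this
      exact this
    obtain ⟨n, hin, htn⟩ := hzf t htB i
    apply htn
    rw [hE]
    exact Set.mem_biUnion (Finset.mem_range.mpr (Nat.lt_succ_of_le hin))
      (subset_closure (hei ▸ hts))
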